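/- Let E₁ : [0,∞) → ℂ be a function satisfying ∫₀ˣ |E₁(t)|/t² dt < +∞ for all x ≥ 0. Then a function F₃ : [0,∞) → ℂ satisfies ∫₀ˣ |F₃(t)|/t dt < +∞ for all x ≥ 0 and the Volterra integral equation of second type F₃(x) − ∫₀ˣ F₃(t)/t dt = E₁(x) for all x ≥ 0 if and only if there exists a complex number A such that F₃(x) = E₁(x) + x·∫₀ˣ E₁(t)/t² dt + A·x for all x ≥ 0. -/

import Mathlib

open Filter MeasureTheory Set


lemma swap_core {a x : ℝ} (ha : 0 ≤ a) (hax : a ≤ x) {w k : ℝ → ℂ}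
    (hw : IntegrableOn w (Ioc 0 x)) (hk : IntegrableOn k (Ioc a x)) :
    ∫ t in Ioc a x, k t * (∫ s in Ioc 0 t, w s) =
      ∫ s in Ioc 0 x, (∫ t in Ioc (max a s) x, k t) * w s := by
  set μ := volume.restrict (Ioc a x) with hμ
  set ν := volume.restrict (Ioc (0:ℝ) x) with hν
  have hS : MeasurableSet {q : ℝ × ℝ | q.2 < q.1} :=
    measurableSet_lt measurable_snd measurable_fst
  set F : ℝ × ℝ → ℂ := ({q : ℝ × ℝ | q.2 < q.1}).indicator
    (fun q => k q.1 * w q.2) with hF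
  have hFint : Integrable F (μ.prod ν) := (hk.mul_prod hw).indicator hS
  have swap := MeasureTheory.integral_integral_swap (f := fun t s => F (t, s))
    (μ := μ) (ν := ν) (by exact hFint)
  have hL : (∫ t, (∫ s, F (t, s) ∂ν) ∂μ) = ∫ t in Ioc a x, k t * (∫ s in Ioc 0 t, w s) := by
    apply setIntegral_congr_fun measurableSet_Ioc
    intro t ht
    show (∫ s, F (t, s) ∂ν) = k t * ∫ s in Ioc 0 t, w s
    have h1 : (fun s => F (t, s)) = (Iio t).indicator (fun s => k t * w s) := by
      funext s
      simp only [hF, Set.indicator_apply, Set.mem_setOf_eq, Set.mem_Iio]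
    rw [h1, hν, integral_indicator measurableSet_Iio,
      Measure.restrict_restrict measurableSet_Iio]
    have h2 : Iio t ∩ Ioc 0 x = Ioo 0 t := by
      ext s
      simp only [mem_inter_iff, mem_Iio, mem_Ioc, mem_Ioo]
      constructor
      · rintro ⟨h1, h2, h3⟩; exact ⟨h2, h1⟩
      · rintro ⟨h1, h2⟩; exact ⟨h2, h1, le_trans h2.le ht.2⟩
    rw [h2, ← integral_Ioc_eq_integral_Ioo, integral_const_mul]
  have hR : (∫ s, (∫ t, F (t, s) ∂μ) ∂ν) =
      ∫ s in Ioc 0 x, (∫ t in Ioc (max a s) x, k t) * w s := by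
    apply setIntegral_congr_fun measurableSet_Ioc
    intro s hs
    show (∫ t, F (t, s) ∂μ) = (∫ t in Ioc (max a s) x, k t) * w s
    have h1 : (fun t => F (t, s)) = (Ioi s).indicator (fun t => k t * w s) := by
      funext t
      simp only [hF, Set.indicator_apply, Set.mem_setOf_eq, Set.mem_Ioi]
    rw [h1, hμ, integral_indicator measurableSet_Ioi,
      Measure.restrict_restrict measurableSet_Ioi]
    have h2 : Ioi s ∩ Ioc a x = Ioc (max a s) x := by
      ext t
      simp only [mem_inter_iff, mem_Ioi, mem_Ioc, max_lt_iff]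
      tauto
    rw [h2, integral_mul_const]
  rw [← hL, ← hR, swap]


lemma int_const_Ioc {c x : ℝ} (h : c ≤ x) :
    ∫ _ in Ioc c x, (1 : ℂ) = ((x : ℂ) - (c : ℂ)) := by
  rw [setIntegral_const, measureReal_def, Real.volume_Ioc, ENNReal.toReal_ofReal (by linarith),
    Complex.real_smul]
  push_cast
  ring

lemma int_invsq_Ioc {c x : ℝ} (hc : 0 < c) (h : c ≤ x) :
    ∫ t in Ioc c x, ((t : ℂ) ^ 2)⁻¹ = (c : ℂ)⁻¹ - (x : ℂ)⁻¹ := by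
  have hcont : ContinuousOn (fun t : ℝ => ((t:ℂ)^2)⁻¹) (Set.uIcc c x) := by
    apply ContinuousOn.inv₀
    · fun_prop
    · intro t ht
      rw [Set.uIcc_of_le h] at ht
      have h0 : (0:ℝ) < t := lt_of_lt_of_le hc ht.1
      simpa using (pow_ne_zero 2 (Complex.ofReal_ne_zero.2 h0.ne'))
  have hderiv : ∀ t ∈ Set.uIcc c x,
      HasDerivAt (fun t : ℝ => -((t:ℂ)⁻¹)) (((t:ℂ)^2)⁻¹) t := by
    intro t ht
    rw [Set.uIcc_of_le h] at ht
    have ht0 : ((t:ℂ)) ≠ 0 := Complex.ofReal_ne_zero.2 (lt_of_lt_of_le hc ht.1).ne'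
    have := ((hasDerivAt_inv ht0).neg).comp_ofReal
    simpa using this
  rw [← intervalIntegral.integral_of_le h,
    intervalIntegral.integral_eq_sub_of_hasDerivAt hderiv hcont.intervalIntegrable]
  ring


lemma tmul_int {x : ℝ} (hx : 0 ≤ x) {w : ℝ → ℂ} (hw : IntegrableOn w (Ioc 0 x)) :
    IntegrableOn (fun t : ℝ => (t : ℂ) * w t) (Ioc 0 x) := by
  apply Integrable.mono' (hw.norm.const_mul x)
  · exact (Complex.continuous_ofReal.aestronglyMeasurable).mul hw.aestronglyMeasurable
  · refine (ae_restrict_iff' measurableSet_Ioc).2 (Eventually.of_forall fun t ht => ?_)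
    rw [norm_mul, Complex.norm_real, Real.norm_eq_abs, abs_of_pos ht.1]
    exact mul_le_mul_of_nonneg_right ht.2 (norm_nonneg _)

lemma primitive_integrableOn {x : ℝ} (hx : 0 ≤ x) {w : ℝ → ℂ}
    (hw : IntegrableOn w (Ioc 0 x)) :
    IntegrableOn (fun t => ∫ s in Ioc 0 t, w s) (Ioc 0 x) := by
  have hIcc : IntegrableOn w (Icc 0 x) := hw.congr_set_ae Ioc_ae_eq_Icc.symm
  have hcont := intervalIntegral.continuousOn_primitive (f := w) (a := 0) (b := x)
    (μ := volume) hIcc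
  exact (hcont.integrableOn_Icc).mono_set Ioc_subset_Icc_self

lemma L2 {x : ℝ} (hx : 0 ≤ x) {w : ℝ → ℂ} (hw : IntegrableOn w (Ioc 0 x)) :
    ∫ t in Ioc 0 x, (∫ s in Ioc 0 t, w s) =
      (x : ℂ) * (∫ s in Ioc 0 x, w s) - ∫ s in Ioc 0 x, (s : ℂ) * w s := by
  have hk : IntegrableOn (fun _ : ℝ => (1 : ℂ)) (Ioc 0 x) :=
    integrableOn_const measure_Ioc_lt_top.ne
  have h1 := swap_core le_rfl hx hw hk
  simp only [one_mul] at h1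
  rw [h1]
  have h2 : ∀ s ∈ Ioc (0:ℝ) x,
      (∫ t in Ioc (max 0 s) x, (1:ℂ)) * w s = (x : ℂ) * w s - (s : ℂ) * w s := by
    intro s hs
    rw [max_eq_right hs.1.le, int_const_Ioc hs.2]
    ring
  rw [setIntegral_congr_fun measurableSet_Ioc h2,
    integral_sub (hw.const_mul _) (tmul_int hx hw), integral_const_mul]

lemma homog {u : ℝ → ℂ} {a x : ℝ} (ha : 0 < a) (hax : a ≤ x)
    (hu : IntegrableOn u (Ioc 0 x))
    (hpt : ∀ t, 0 < t → t ≤ x → (t : ℂ) * u t = ∫ s in Ioc 0 t, u s) :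
    (a : ℂ)⁻¹ * ∫ s in Ioc 0 a, u s = (x : ℂ)⁻¹ * ∫ s in Ioc 0 x, u s := by
  have hx : 0 < x := lt_of_lt_of_le ha hax
  have hk : IntegrableOn (fun t : ℝ => ((t : ℂ) ^ 2)⁻¹) (Ioc a x) := by
    have hc : ContinuousOn (fun t : ℝ => ((t : ℂ) ^ 2)⁻¹) (Icc a x) := by
      apply ContinuousOn.inv₀
      · fun_prop
      · intro t ht
        simpa using pow_ne_zero 2 (Complex.ofReal_ne_zero.2 (lt_of_lt_of_le ha ht.1).ne')
    exact hc.integrableOn_Icc.mono_set Ioc_subset_Icc_self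
  have huIax : IntegrableOn u (Ioc a x) := hu.mono_set (Ioc_subset_Ioc ha.le le_rfl)
  have hu0a : IntegrableOn u (Ioc 0 a) := hu.mono_set (Ioc_subset_Ioc le_rfl hax)
  have hinvu : IntegrableOn (fun s : ℝ => (s : ℂ)⁻¹ * u s) (Ioc a x) := by
    apply Integrable.mono' (huIax.norm.const_mul a⁻¹)
    · exact (Complex.measurable_ofReal.inv.aestronglyMeasurable).mul
        huIax.aestronglyMeasurable
    · refine (ae_restrict_iff' measurableSet_Ioc).2 (Eventually.of_forall fun t ht => ?_)
      rw [norm_mul, norm_inv, Complex.norm_real, Real.norm_eq_abs,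
        abs_of_pos (lt_trans ha ht.1)]
      exact mul_le_mul_of_nonneg_right
        (inv_anti₀ ha ht.1.le) (norm_nonneg _)
  have hswap := swap_core ha.le hax hu hk
  have hL : ∀ t ∈ Ioc a x,
      ((t : ℂ) ^ 2)⁻¹ * (∫ s in Ioc 0 t, u s) = (t : ℂ)⁻¹ * u t := by
    intro t ht
    have ht0 : (t : ℂ) ≠ 0 := Complex.ofReal_ne_zero.2 (lt_trans ha ht.1).ne'
    rw [← hpt t (lt_trans ha ht.1) ht.2]
    field_simp
  rw [setIntegral_congr_fun measurableSet_Ioc hL] at hswap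
  have hR : ∀ s ∈ Ioc (0:ℝ) x,
      (∫ t in Ioc (max a s) x, ((t : ℂ) ^ 2)⁻¹) * u s
        = (((max a s : ℝ) : ℂ)⁻¹ - (x : ℂ)⁻¹) * u s := by
    intro s hs
    rw [int_invsq_Ioc (lt_of_lt_of_le ha (le_max_left a s)) (max_le hax hs.2)]
  rw [setIntegral_congr_fun measurableSet_Ioc hR] at hswap
  -- integrability of the RHS integrand on Ioc 0 x
  have hcont : Continuous (fun s : ℝ => (((max a s : ℝ) : ℂ)⁻¹ - (x : ℂ)⁻¹)) := by
    refine Continuous.sub ?_ continuous_const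
    refine Continuous.inv₀ (Complex.continuous_ofReal.comp
      (continuous_const.max continuous_id)) ?_
    intro s
    exact Complex.ofReal_ne_zero.2 (lt_of_lt_of_le ha (le_max_left a s)).ne'
  have hRint : IntegrableOn
      (fun s : ℝ => (((max a s : ℝ) : ℂ)⁻¹ - (x : ℂ)⁻¹) * u s) (Ioc 0 x) := by
    apply Integrable.mono' (hu.norm.const_mul (a⁻¹ + x⁻¹))
    · exact hcont.aestronglyMeasurable.mul hu.aestronglyMeasurable
    · refine (ae_restrict_iff' measurableSet_Ioc).2 (Eventually.of_forall fun s hs => ?_)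
      rw [norm_mul]
      refine mul_le_mul_of_nonneg_right ?_ (norm_nonneg _)
      refine le_trans (norm_sub_le _ _) ?_
      rw [norm_inv, norm_inv, Complex.norm_real, Complex.norm_real,
        Real.norm_eq_abs, Real.norm_eq_abs, abs_of_pos (lt_of_lt_of_le ha (le_max_left a s)),
        abs_of_pos hx]
      have : a⁻¹ ≥ (max a s)⁻¹ := inv_anti₀ ha (le_max_left a s)
      linarith
  -- split RHS over Ioc 0 a ∪ Ioc a x
  have hsplit : ∫ s in Ioc (0:ℝ) x, (((max a s : ℝ) : ℂ)⁻¹ - (x : ℂ)⁻¹) * u s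
      = (∫ s in Ioc (0:ℝ) a, (((max a s : ℝ) : ℂ)⁻¹ - (x : ℂ)⁻¹) * u s)
        + ∫ s in Ioc a x, (((max a s : ℝ) : ℂ)⁻¹ - (x : ℂ)⁻¹) * u s := by
    rw [← Ioc_union_Ioc_eq_Ioc ha.le hax]
    exact setIntegral_union (Ioc_disjoint_Ioc_of_le le_rfl) measurableSet_Ioc
      (hRint.mono_set (Ioc_subset_Ioc le_rfl hax))
      (hRint.mono_set (Ioc_subset_Ioc ha.le le_rfl))
  have h0a : ∫ s in Ioc (0:ℝ) a, (((max a s : ℝ) : ℂ)⁻¹ - (x : ℂ)⁻¹) * u s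
      = ((a : ℂ)⁻¹ - (x : ℂ)⁻¹) * ∫ s in Ioc (0:ℝ) a, u s := by
    rw [← integral_const_mul]
    apply setIntegral_congr_fun measurableSet_Ioc
    intro s hs
    simp only
    rw [max_eq_left hs.2]
  have hax2 : ∫ s in Ioc a x, (((max a s : ℝ) : ℂ)⁻¹ - (x : ℂ)⁻¹) * u s
      = (∫ s in Ioc a x, (s : ℂ)⁻¹ * u s) - (x : ℂ)⁻¹ * ∫ s in Ioc a x, u s := by
    have hcg : ∀ s ∈ Ioc a x, (((max a s : ℝ) : ℂ)⁻¹ - (x : ℂ)⁻¹) * u s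
        = (s : ℂ)⁻¹ * u s - (x : ℂ)⁻¹ * u s := by
      intro s hs
      rw [max_eq_right hs.1.le]
      ring
    rw [setIntegral_congr_fun measurableSet_Ioc hcg,
      integral_sub hinvu (huIax.const_mul _), integral_const_mul]
  have htot : ∫ s in Ioc (0:ℝ) x, u s
      = (∫ s in Ioc (0:ℝ) a, u s) + ∫ s in Ioc a x, u s := by
    rw [← Ioc_union_Ioc_eq_Ioc ha.le hax]
    exact setIntegral_union (Ioc_disjoint_Ioc_of_le le_rfl) measurableSet_Ioc hu0a huIax
  rw [hsplit, h0a, hax2] at hswap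
  have hane : (a : ℂ) ≠ 0 := Complex.ofReal_ne_zero.2 ha.ne'
  have hxne : (x : ℂ) ≠ 0 := Complex.ofReal_ne_zero.2 hx.ne'
  rw [htot]
  linear_combination -hswap

/-- Let `E₁ : [0,∞) → ℂ` satisfy `∫₀ˣ |E₁(t)|/t² dt < +∞` for all
`x ≥ 0`. Then a function `F₃ : [0,∞) → ℂ` satisfies `∫₀ˣ |F₃(t)|/t dt < +∞` for all
`x ≥ 0` and the Volterra integral equation `F₃(x) − ∫₀ˣ F₃(t)/t dt = E₁(x)` for all
`x ≥ 0` if and only if there exists `A ∈ ℂ` with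
`F₃(x) = E₁(x) + x·∫₀ˣ E₁(t)/t² dt + A·x` for all `x ≥ 0`. -/
theorem stmt_10
    (E₁ : ℝ → ℂ)
    (hE : ∀ x : ℝ, 0 ≤ x →
      IntegrableOn (fun t => E₁ t / (t : ℂ) ^ 2) (Set.Ioc 0 x))
    (F₃ : ℝ → ℂ) :
    ((∀ x : ℝ, 0 ≤ x → IntegrableOn (fun t => F₃ t / (t : ℂ)) (Set.Ioc 0 x)) ∧
      (∀ x : ℝ, 0 ≤ x →
        F₃ x - (∫ t in Set.Ioc (0:ℝ) x, F₃ t / (t : ℂ)) = E₁ x)) ↔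
    (∃ A : ℂ, ∀ x : ℝ, 0 ≤ x →
      F₃ x = E₁ x + (x : ℂ) * (∫ t in Set.Ioc (0:ℝ) x, E₁ t / (t : ℂ) ^ 2)
        + A * (x : ℂ)) := by
  set H : ℝ → ℂ := fun y => ∫ t in Ioc (0:ℝ) y, E₁ t / (t : ℂ) ^ 2 with hH
  -- E₁ t / t is integrable
  have hE1div : ∀ y : ℝ, 0 ≤ y → IntegrableOn (fun t => E₁ t / (t : ℂ)) (Ioc 0 y) := by
    intro y hy
    apply (tmul_int hy (hE y hy)).congr_fun ?_ measurableSet_Ioc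
    intro t ht
    have ht0 : (t : ℂ) ≠ 0 := Complex.ofReal_ne_zero.2 ht.1.ne'
    field_simp
  have hHint : ∀ y : ℝ, 0 ≤ y → IntegrableOn H (Ioc 0 y) := fun y hy =>
    primitive_integrableOn hy (hE y hy)
  -- key identity: ∫₀ʸ H = y * H y - ∫₀ʸ E₁/t
  have hkey : ∀ y : ℝ, 0 ≤ y →
      ∫ t in Ioc (0:ℝ) y, H t = (y : ℂ) * H y - ∫ t in Ioc (0:ℝ) y, E₁ t / (t : ℂ) := by
    intro y hy
    have h1 := L2 hy (hE y hy)
    have h2 : ∫ s in Ioc (0:ℝ) y, (s : ℂ) * (E₁ s / (s:ℂ)^2)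
        = ∫ s in Ioc (0:ℝ) y, E₁ s / (s : ℂ) := by
      apply setIntegral_congr_fun measurableSet_Ioc
      intro s hs
      have hs0 : (s : ℂ) ≠ 0 := Complex.ofReal_ne_zero.2 hs.1.ne'
      simp only
      field_simp
    rw [h2] at h1
    exact h1
  constructor
  · rintro ⟨hint, heq⟩
    set u : ℝ → ℂ := fun t => F₃ t / t - E₁ t / t - H t with hu
    have hu_int : ∀ y : ℝ, 0 ≤ y → IntegrableOn u (Ioc 0 y) := fun y hy =>
      ((hint y hy).sub (hE1div y hy)).sub (hHint y hy)
    have hsum : ∀ y : ℝ, 0 ≤ y → ∫ s in Ioc (0:ℝ) y, u s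
        = (∫ t in Ioc (0:ℝ) y, F₃ t / (t:ℂ)) - (y : ℂ) * H y := by
      intro y hy
      have hfg : Integrable (fun s : ℝ => F₃ s / (s:ℂ) - E₁ s / (s:ℂ))
          (volume.restrict (Ioc 0 y)) := (hint y hy).sub (hE1div y hy)
      have e : ∫ s in Ioc (0:ℝ) y, u s
          = (∫ s in Ioc (0:ℝ) y, (F₃ s / (s:ℂ) - E₁ s / (s:ℂ)))
            - ∫ s in Ioc (0:ℝ) y, H s :=
        integral_sub hfg (hHint y hy)
      have e2 : (∫ s in Ioc (0:ℝ) y, (F₃ s / (s:ℂ) - E₁ s / (s:ℂ)))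
          = (∫ s in Ioc (0:ℝ) y, F₃ s / (s:ℂ)) - ∫ s in Ioc (0:ℝ) y, E₁ s / (s:ℂ) :=
        integral_sub (hint y hy) (hE1div y hy)
      linear_combination e + e2 - hkey y hy
    have hpt : ∀ t : ℝ, 0 < t → (t : ℂ) * u t = ∫ s in Ioc (0:ℝ) t, u s := by
      intro t ht
      have ht0 : (t : ℂ) ≠ 0 := Complex.ofReal_ne_zero.2 ht.ne'
      rw [hsum t ht.le]
      have hG : F₃ t - (∫ s in Ioc (0:ℝ) t, F₃ s / (s:ℂ)) = E₁ t := heq t ht.le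
      have hlhs : (t : ℂ) * u t = F₃ t - E₁ t - (t:ℂ) * H t := by
        rw [hu]
        field_simp
      rw [hlhs]
      linear_combination hG
    refine ⟨∫ s in Ioc (0:ℝ) 1, u s, ?_⟩
    intro y hy
    rcases eq_or_lt_of_le hy with h0 | h0
    · have h0' : y = 0 := h0.symm
      subst h0'
      have := heq 0 le_rfl
      simp only [Ioc_self, Measure.restrict_empty, integral_zero_measure, sub_zero] at this
      simp [this]
    · have hyne : (y : ℂ) ≠ 0 := Complex.ofReal_ne_zero.2 h0.ne'
      have hkey2 : (y : ℂ)⁻¹ * ∫ s in Ioc (0:ℝ) y, u s = ∫ s in Ioc (0:ℝ) 1, u s := by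
        rcases le_total y 1 with hc | hc
        · have h := homog h0 hc (hu_int 1 zero_le_one) (fun t ht _ => hpt t ht)
          simpa using h
        · have h := homog one_pos hc (hu_int y hy) (fun t ht _ => hpt t ht)
          simp at h
          exact h.symm
      have hval : ∫ s in Ioc (0:ℝ) y, u s = (∫ s in Ioc (0:ℝ) 1, u s) * (y : ℂ) := by
        rw [← hkey2]
        field_simp
      have hs := hsum y hy
      rw [hval] at hs
      have hG : F₃ y - (∫ s in Ioc (0:ℝ) y, F₃ s / (s:ℂ)) = E₁ y := heq y hy
      have hHy : (∫ t in Ioc (0:ℝ) y, E₁ t / (t:ℂ)^2) = H y := rfl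
      rw [hHy]
      linear_combination hG - hs
  · rintro ⟨A, hA⟩
    have hint : ∀ y : ℝ, 0 ≤ y → IntegrableOn (fun t => F₃ t / (t : ℂ)) (Ioc 0 y) := by
      intro y hy
      have hgood : IntegrableOn (fun t : ℝ => E₁ t / (t:ℂ) + H t + A) (Ioc 0 y) :=
        ((hE1div y hy).add (hHint y hy)).add
          (integrableOn_const measure_Ioc_lt_top.ne)
      apply hgood.congr_fun ?_ measurableSet_Ioc
      intro t ht
      have ht0 : (t : ℂ) ≠ 0 := Complex.ofReal_ne_zero.2 ht.1.ne'
      simp only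
      rw [hA t ht.1.le]
      have hHt : (∫ s in Ioc (0:ℝ) t, E₁ s / (s:ℂ)^2) = H t := rfl
      rw [hHt]
      field_simp
    refine ⟨hint, ?_⟩
    intro y hy
    have hmem : ∫ t in Ioc (0:ℝ) y, F₃ t / (t:ℂ)
        = ∫ t in Ioc (0:ℝ) y, (E₁ t / (t:ℂ) + H t + A) := by
      apply setIntegral_congr_fun measurableSet_Ioc
      intro t ht
      have ht0 : (t : ℂ) ≠ 0 := Complex.ofReal_ne_zero.2 ht.1.ne'
      simp only
      rw [hA t ht.1.le]
      have hHt : (∫ s in Ioc (0:ℝ) t, E₁ s / (s:ℂ)^2) = H t := rfl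
      rw [hHt]
      field_simp
    have hconst : ∫ _ in Ioc (0:ℝ) y, A = (y : ℂ) * A := by
      rw [setIntegral_const, measureReal_def, Real.volume_Ioc, ENNReal.toReal_ofReal (by linarith),
        Complex.real_smul]
      push_cast
      ring
    have i1 : Integrable (fun t : ℝ => E₁ t / (t:ℂ) + H t)
        (volume.restrict (Ioc 0 y)) := (hE1div y hy).add (hHint y hy)
    have iC : Integrable (fun _ : ℝ => A) (volume.restrict (Ioc 0 y)) :=
      integrableOn_const measure_Ioc_lt_top.ne
    have j1 : ∫ t in Ioc (0:ℝ) y, (E₁ t / (t:ℂ) + H t + A)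
        = (∫ t in Ioc (0:ℝ) y, (E₁ t / (t:ℂ) + H t)) + ∫ _ in Ioc (0:ℝ) y, A :=
      integral_add i1 iC
    have j2 : ∫ t in Ioc (0:ℝ) y, (E₁ t / (t:ℂ) + H t)
        = (∫ t in Ioc (0:ℝ) y, E₁ t / (t:ℂ)) + ∫ t in Ioc (0:ℝ) y, H t :=
      integral_add (hE1div y hy) (hHint y hy)
    have hHy : (∫ t in Ioc (0:ℝ) y, E₁ t / (t:ℂ)^2) = H y := rfl
    rw [hmem, hA y hy, hHy]
    linear_combination -j1 - j2 - hconst - hkey y hy
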